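/- Let 0 < p ≤ p' < ∞ and let A be a Hermitian 3×3 complex matrix. Then there exist finitely many Hermitian 3×3 complex matrices B_1, …, B_K such that |A ⊗ₖ 1 − 1 ⊗ₖ Aᵀ|^p = Σ_{k=1}^K |B_k ⊗ₖ 1 − 1 ⊗ₖ B_kᵀ|^{p'}. (Consequently C_p(ℂ³) ⊆ C_{p'}(ℂ³) for p ≤ p'.) -/

import Mathlib

open Kronecker Matrix
open scoped ComplexOrder

/-- `costOp p A` is the cost operator `|A ⊗ₖ 1 - 1 ⊗ₖ Aᵀ|^p`, where `|·|^p` is the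
functional calculus applied with `x ↦ |x| ^ p` (real rpow). -/
noncomputable def costOp {n : ℕ} (p : ℝ) (A : Matrix (Fin n) (Fin n) ℂ) :
    Matrix (Fin n × Fin n) (Fin n × Fin n) ℂ :=
  cfc (fun x : ℝ => |x| ^ p)
    (A ⊗ₖ (1 : Matrix (Fin n) (Fin n) ℂ) - (1 : Matrix (Fin n) (Fin n) ℂ) ⊗ₖ Aᵀ)

lemma rpow_subadd {x y r : ℝ} (hx : 0 ≤ x) (hy : 0 ≤ y) (hr : 0 ≤ r) (hr1 : r ≤ 1) :
    (x + y) ^ r ≤ x ^ r + y ^ r := by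
  have h := NNReal.rpow_add_le_add_rpow x.toNNReal y.toNNReal hr hr1
  have hcast : ((x.toNNReal + y.toNNReal : NNReal) : ℝ) = x + y := by
    push_cast
    rw [Real.coe_toNNReal _ hx, Real.coe_toNNReal _ hy]
  calc (x + y) ^ r = (((x.toNNReal + y.toNNReal) ^ r : NNReal) : ℝ) := by
        rw [NNReal.coe_rpow, hcast]
    _ ≤ ((x.toNNReal ^ r + y.toNNReal ^ r : NNReal) : ℝ) := by exact_mod_cast h
    _ = x ^ r + y ^ r := by
        push_cast
        rw [Real.coe_toNNReal _ hx, Real.coe_toNNReal _ hy]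

lemma scalar_key {p q : ℝ} (hp : 0 < p) (hq : 0 < q) (hpq : p ≤ q)
    {a b c : ℝ} (hab : a ≤ b) (hbc : b ≤ c) :
    ∃ g₁ g₂ : ℝ → ℝ,
      ∀ x ∈ ({a, b, c} : Set ℝ), ∀ y ∈ ({a, b, c} : Set ℝ),
        |x - y| ^ p = |g₁ x - g₁ y| ^ q + |g₂ x - g₂ y| ^ q := by
  have hq0 : q ≠ 0 := hq.ne'
  set u := (b - a) ^ p with hu
  set w := (c - b) ^ p with hw
  set v := (c - a) ^ p with hv
  have hba : (0:ℝ) ≤ b - a := sub_nonneg.2 hab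
  have hcb : (0:ℝ) ≤ c - b := sub_nonneg.2 hbc
  have hca : (0:ℝ) ≤ c - a := by linarith
  have hu0 : 0 ≤ u := Real.rpow_nonneg hba p
  have hw0 : 0 ≤ w := Real.rpow_nonneg hcb p
  have hv0 : 0 ≤ v := Real.rpow_nonneg hca p
  have huv : u ≤ v := Real.rpow_le_rpow hba (by linarith) hp.le
  have hwv : w ≤ v := Real.rpow_le_rpow hcb (by linarith) hp.le
  set V := v ^ q⁻¹ with hV
  set S := u ^ q⁻¹ with hS
  have hS0 : 0 ≤ S := Real.rpow_nonneg hu0 _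
  have hSV : S ≤ V := Real.rpow_le_rpow hu0 huv (by positivity)
  have hVq : V ^ q = v := Real.rpow_inv_rpow hv0 hq0
  have hSq : S ^ q = u := Real.rpow_inv_rpow hu0 hq0
  -- subadditivity : V ≤ S + w ^ q⁻¹
  have hsub : V ≤ S + w ^ q⁻¹ := by
    have h1 : V = (c - a) ^ (p * q⁻¹) := by rw [hV, hv, ← Real.rpow_mul hca]
    have h2 : S = (b - a) ^ (p * q⁻¹) := by rw [hS, hu, ← Real.rpow_mul hba]
    have h3 : w ^ q⁻¹ = (c - b) ^ (p * q⁻¹) := by rw [hw, ← Real.rpow_mul hcb]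
    have hr0 : 0 ≤ p * q⁻¹ := by positivity
    have hr1 : p * q⁻¹ ≤ 1 := by
      rw [← div_eq_mul_inv]
      exact (div_le_one hq).2 hpq
    have hca' : c - a = (b - a) + (c - b) := by ring
    rw [h1, h2, h3, hca']
    exact rpow_subadd hba hcb hr0 hr1
  -- intermediate value theorem
  set h : ℝ → ℝ := fun s => (u - s ^ q) - (w - (V - s) ^ q) with hh
  have hcont : Continuous h := by
    have c1 : Continuous fun s : ℝ => s ^ q := Real.continuous_rpow_const hq.le
    exact (continuous_const.sub c1).sub
      (continuous_const.sub (c1.comp (continuous_const.sub continuous_id)))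
  have hh0 : 0 ≤ h 0 := by
    simp only [hh]
    rw [Real.zero_rpow hq0, sub_zero, sub_zero, hVq]
    linarith
  have hhS : h S ≤ 0 := by
    have hVS : (V - S) ^ q ≤ w := by
      have h1 : V - S ≤ w ^ q⁻¹ := by linarith
      have h2 : (V - S) ^ q ≤ (w ^ q⁻¹) ^ q :=
        Real.rpow_le_rpow (by linarith) h1 hq.le
      rwa [Real.rpow_inv_rpow hw0 hq0] at h2
    simp only [hh]
    rw [hSq]
    linarith
  obtain ⟨s, hsmem, hs⟩ : ∃ s ∈ Set.Icc (0:ℝ) S, h s = 0 := by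
    have hIcc := intermediate_value_Icc' hS0 hcont.continuousOn
    exact hIcc ⟨hhS, hh0⟩
  obtain ⟨hs0, hsS⟩ := hsmem
  have hsq_le : s ^ q ≤ u := by
    rw [← hSq]; exact Real.rpow_le_rpow hs0 hsS hq.le
  have hsq0 : 0 ≤ s ^ q := Real.rpow_nonneg hs0 q
  set t := V - s with ht
  have ht0 : 0 ≤ t := by
    have : s ≤ V := hsS.trans hSV
    simp only [ht]; linarith
  have heq : u - s ^ q = w - t ^ q := by
    have := hs
    simp only [hh, ← ht] at this
    linarith
  set R := (u - s ^ q) ^ q⁻¹ with hR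
  have hR0 : 0 ≤ R := Real.rpow_nonneg (by linarith) _
  have hRq : R ^ q = u - s ^ q := Real.rpow_inv_rpow (by linarith) hq0
  have htq : t ^ q = w - R ^ q := by rw [hRq]; linarith
  have hstV : s + t = V := by simp only [ht]; ring
  have htq0 : 0 ≤ t ^ q := Real.rpow_nonneg ht0 q
  -- degenerate cases
  have hu_ab : a = b → u = 0 := fun hab' => by
    rw [hu, hab', sub_self, Real.zero_rpow hp.ne']
  have hw_bc : b = c → w = 0 := fun hbc' => by
    rw [hw, hbc', sub_self, Real.zero_rpow hp.ne']
  have hs_ab : a = b → s = 0 := fun hab' => by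
    have h1 : s ^ q = 0 := le_antisymm (by rw [← hu_ab hab']; exact hsq_le) hsq0
    have := (Real.rpow_eq_zero hs0 hq0).1 h1
    exact this
  have hR_ab : a = b → R = 0 := fun hab' => by
    have h2 := hu_ab hab'
    have h1 : R ^ q = 0 := by rw [hRq]; linarith
    exact (Real.rpow_eq_zero hR0 hq0).1 h1
  have ht_bc : b = c → t = 0 := fun hbc' => by
    have h2 := hw_bc hbc'
    have hRq0 : 0 ≤ R ^ q := by rw [hRq]; linarith
    have h1 : t ^ q = 0 := by rw [htq]; linarith
    exact (Real.rpow_eq_zero ht0 hq0).1 h1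
  have hR_bc : b = c → R = 0 := fun hbc' => by
    have h2 := hw_bc hbc'
    have h1 : R ^ q = 0 := by rw [hRq]; linarith
    exact (Real.rpow_eq_zero hR0 hq0).1 h1
  -- the two functions
  refine ⟨(fun x => if x = a then 0 else if x = b then s else if x = c then s + t else 0),
    (fun x => if x = b then R else 0), ?_⟩
  set g₁ : ℝ → ℝ :=
    fun x => if x = a then 0 else if x = b then s else if x = c then s + t else 0 with hg₁
  set g₂ : ℝ → ℝ := fun x => if x = b then R else 0 with hg₂
  have g1a : g₁ a = 0 := by simp [hg₁]
  have g1b : g₁ b = s := by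
    by_cases h1 : b = a
    · simp only [hg₁]; rw [if_pos h1, hs_ab h1.symm]
    · simp only [hg₁]; rw [if_neg h1]; simp
  have g1c : g₁ c = s + t := by
    by_cases h1 : c = a
    · have hab' : a = b := le_antisymm hab (h1 ▸ hbc)
      have hbc' : b = c := by apply le_antisymm hbc; rw [h1]; exact hab
      simp only [hg₁]; rw [if_pos h1, hs_ab hab', ht_bc hbc', add_zero]
    · by_cases h2 : c = b
      · simp only [hg₁]; rw [if_neg h1, if_pos h2, ht_bc h2.symm, add_zero]
      · simp only [hg₁]; rw [if_neg h1, if_neg h2]; simp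
  have g2a : g₂ a = 0 := by
    by_cases h1 : a = b
    · simp only [hg₂]; rw [if_pos h1, hR_ab h1]
    · simp only [hg₂]; rw [if_neg h1]
  have g2b : g₂ b = R := by simp [hg₂]
  have g2c : g₂ c = 0 := by
    by_cases h1 : c = b
    · simp only [hg₂]; rw [if_pos h1, hR_bc h1.symm]
    · simp only [hg₂]; rw [if_neg h1]
  -- the three core identities
  have key_ab : |a - b| ^ p = |g₁ a - g₁ b| ^ q + |g₂ a - g₂ b| ^ q := by
    rw [g1a, g1b, g2a, g2b, abs_sub_comm a b, abs_of_nonneg hba,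
      abs_sub_comm, sub_zero, abs_of_nonneg hs0, abs_sub_comm, sub_zero, abs_of_nonneg hR0]
    rw [hRq]; simp only [← hu]; ring
  have key_ac : |a - c| ^ p = |g₁ a - g₁ c| ^ q + |g₂ a - g₂ c| ^ q := by
    rw [g1a, g1c, g2a, g2c, abs_sub_comm a c, abs_of_nonneg hca,
      abs_sub_comm, sub_zero, abs_of_nonneg (by linarith : (0:ℝ) ≤ s + t), sub_self, abs_zero,
      Real.zero_rpow hq0, hstV, hVq]
    simp only [← hv]; ring
  have key_bc : |b - c| ^ p = |g₁ b - g₁ c| ^ q + |g₂ b - g₂ c| ^ q := by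
    rw [g1b, g1c, g2b, g2c, abs_sub_comm b c, abs_of_nonneg hcb, sub_zero, abs_of_nonneg hR0]
    have : |s - (s + t)| = t := by rw [abs_sub_comm]; simp [abs_of_nonneg ht0]
    rw [this, htq]
    simp only [← hw]; ring
  have key_diag : ∀ x : ℝ, |x - x| ^ p = |g₁ x - g₁ x| ^ q + |g₂ x - g₂ x| ^ q := by
    intro x
    simp [Real.zero_rpow hq0, Real.zero_rpow hp.ne']
  have symm : ∀ x y : ℝ,
      |x - y| ^ p = |g₁ x - g₁ y| ^ q + |g₂ x - g₂ y| ^ q →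
      |y - x| ^ p = |g₁ y - g₁ x| ^ q + |g₂ y - g₂ x| ^ q := by
    intro x y hxy
    rw [abs_sub_comm y x, abs_sub_comm (g₁ y), abs_sub_comm (g₂ y)]
    exact hxy
  intro x hx y hy
  simp only [Set.mem_insert_iff, Set.mem_singleton_iff] at hx hy
  rcases hx with rfl | rfl | rfl <;> rcases hy with rfl | rfl | rfl
  · exact key_diag _
  · exact key_ab
  · exact key_ac
  · exact symm _ _ key_ab
  · exact key_diag _
  · exact key_bc
  · exact symm _ _ key_ac
  · exact symm _ _ key_bc
  · exact key_diag _

/-- cfc of a unitary conjugate of a real diagonal matrix. -/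
lemma cfc_unitary_diag {N : Type*} [Fintype N] [DecidableEq N]
    (U : Matrix N N ℂ) (hU1 : U * Uᴴ = 1) (hU2 : Uᴴ * U = 1) (d : N → ℝ) (f : ℝ → ℝ) :
    cfc f (U * Matrix.diagonal (Complex.ofReal ∘ d) * Uᴴ)
      = U * Matrix.diagonal (Complex.ofReal ∘ f ∘ d) * Uᴴ := by
  classical
  set D : Matrix N N ℂ := Matrix.diagonal (Complex.ofReal ∘ d) with hD
  have hstar : star (Complex.ofReal ∘ d) = Complex.ofReal ∘ d := by
    funext i
    simp [Complex.conj_ofReal]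
  have hDsa : Dᴴ = D := by
    rw [hD, Matrix.diagonal_conjTranspose, hstar]
  have hsa : _root_.IsSelfAdjoint (U * D * Uᴴ) := by
    show star (U * D * Uᴴ) = U * D * Uᴴ
    rw [Matrix.star_eq_conjTranspose, Matrix.conjTranspose_mul,
      Matrix.conjTranspose_mul, Matrix.conjTranspose_conjTranspose, hDsa, Matrix.mul_assoc]
  -- spectrum
  have hUu : U ∈ unitary (Matrix N N ℂ) := by
    rw [Unitary.mem_iff, Matrix.star_eq_conjTranspose]
    exact ⟨hU2, hU1⟩
  have hspec : spectrum ℝ (U * D * Uᴴ) ⊆ Set.range d := by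
    intro x hx
    have hconj : spectrum ℝ (U * D * Uᴴ) = spectrum ℝ D := by
      have := Unitary.spectrum_star_right_conjugate (R := ℝ) (a := D) (U := ⟨U, hUu⟩)
      simpa [Matrix.star_eq_conjTranspose] using this
    rw [hconj, ← spectrum.algebraMap_mem_iff ℂ, hD, spectrum_diagonal] at hx
    obtain ⟨i, hi⟩ := hx
    exact ⟨i, Complex.ofReal_inj.mp (by simpa using hi)⟩
  -- interpolating polynomial
  set P : Polynomial ℝ := Lagrange.interpolate (Finset.univ.image d) id f with hP
  have hPev : ∀ i, P.eval (d i) = f (d i) := fun i =>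
    Lagrange.eval_interpolate_at_node _ (Set.injOn_id _)
      (Finset.mem_image_of_mem d (Finset.mem_univ i))
  have hfP : (spectrum ℝ (U * D * Uᴴ)).EqOn f P.eval := fun x hx => by
    obtain ⟨i, rfl⟩ := hspec hx
    exact (hPev i).symm
  rw [cfc_congr hfP, cfc_polynomial P _ hsa]
  -- conjugation algebra homomorphism
  let φ : Matrix N N ℂ →ₐ[ℝ] Matrix N N ℂ :=
    { toFun := fun X => U * X * Uᴴ
      map_one' := by show U * 1 * Uᴴ = 1; rw [Matrix.mul_one]; exact hU1
      map_mul' := fun X Y => by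
        show U * (X * Y) * Uᴴ = (U * X * Uᴴ) * (U * Y * Uᴴ)
        calc U * (X * Y) * Uᴴ = U * X * (Uᴴ * U) * Y * Uᴴ := by
              rw [hU2, Matrix.mul_one]; noncomm_ring
          _ = (U * X * Uᴴ) * (U * Y * Uᴴ) := by noncomm_ring
      map_zero' := by
        show U * 0 * Uᴴ = 0
        rw [Matrix.mul_zero, Matrix.zero_mul]
      map_add' := fun X Y => by
        show U * (X + Y) * Uᴴ = U * X * Uᴴ + U * Y * Uᴴ
        rw [Matrix.mul_add, Matrix.add_mul]
      commutes' := fun r => by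
        show U * algebraMap ℝ (Matrix N N ℂ) r * Uᴴ = algebraMap ℝ (Matrix N N ℂ) r
        rw [Algebra.algebraMap_eq_smul_one, Matrix.mul_smul, Matrix.mul_one, Matrix.smul_mul, hU1] }
  have h1 : Polynomial.aeval (U * D * Uᴴ) P = φ (Polynomial.aeval D P) :=
    (Polynomial.aeval_algHom_apply φ D P)
  have h2 : Polynomial.aeval D P = Matrix.diagonal (Complex.ofReal ∘ f ∘ d) := by
    have h3 : Polynomial.aeval D P
        = (Matrix.diagonalAlgHom (n := N) (α := ℂ) ℝ) (Polynomial.aeval (Complex.ofReal ∘ d) P) :=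
      (Polynomial.aeval_algHom_apply (Matrix.diagonalAlgHom (n := N) (α := ℂ) ℝ) (Complex.ofReal ∘ d) P)
    rw [h3]
    have h4 : Polynomial.aeval (Complex.ofReal ∘ d) P = Complex.ofReal ∘ f ∘ d := by
      funext i
      have h5 : (Polynomial.aeval (Complex.ofReal ∘ d) P) i
          = Polynomial.aeval ((Complex.ofReal ∘ d) i) P :=
        (Polynomial.aeval_algHom_apply (Pi.evalAlgHom ℝ (fun _ : N => ℂ) i)
          (Complex.ofReal ∘ d) P).symm
      rw [h5]
      show Polynomial.aeval ((algebraMap ℝ ℂ) (d i)) P = Complex.ofReal (f (d i))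
      rw [Polynomial.aeval_algebraMap_apply]
      simp [hPev i]
    rw [h4]
    rfl
  rw [h1, h2]
  rfl

lemma kron_conjTranspose {l m p q : Type*} [Fintype l] [Fintype p]
    (X : Matrix l m ℂ) (Y : Matrix p q ℂ) : (X ⊗ₖ Y)ᴴ = Xᴴ ⊗ₖ Yᴴ := by
  ext ⟨i, j⟩ ⟨k, l'⟩
  simp [Matrix.conjTranspose_apply, Matrix.kroneckerMap_apply, star_mul', mul_comm]

/-- decomposition of the commutator-type Kronecker difference. -/
lemma kron_conj_decomp {n : ℕ} (U : Matrix (Fin n) (Fin n) ℂ)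
    (hU1 : U * Uᴴ = 1) (hU2 : Uᴴ * U = 1) (v : Fin n → ℝ) :
    (U * Matrix.diagonal (Complex.ofReal ∘ v) * Uᴴ) ⊗ₖ (1 : Matrix (Fin n) (Fin n) ℂ)
      - (1 : Matrix (Fin n) (Fin n) ℂ) ⊗ₖ (U * Matrix.diagonal (Complex.ofReal ∘ v) * Uᴴ)ᵀ
    = (U ⊗ₖ Uᴴᵀ)
        * Matrix.diagonal (Complex.ofReal ∘ fun ij : Fin n × Fin n => v ij.1 - v ij.2)
        * (U ⊗ₖ Uᴴᵀ)ᴴ := by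
  set D : Matrix (Fin n) (Fin n) ℂ := Matrix.diagonal (Complex.ofReal ∘ v) with hD
  have hUHT : (Uᴴᵀ)ᴴ = Uᵀ := by
    ext i j
    simp [Matrix.conjTranspose_apply, Matrix.transpose_apply]
  have hWH : (U ⊗ₖ Uᴴᵀ)ᴴ = Uᴴ ⊗ₖ Uᵀ := by
    rw [kron_conjTranspose, hUHT]
  have hdiag : D ⊗ₖ (1 : Matrix (Fin n) (Fin n) ℂ) - (1 : Matrix (Fin n) (Fin n) ℂ) ⊗ₖ D
      = Matrix.diagonal (Complex.ofReal ∘ fun ij : Fin n × Fin n => v ij.1 - v ij.2) := by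
    rw [hD, ← Matrix.diagonal_one, Matrix.diagonal_kronecker_diagonal,
      Matrix.diagonal_kronecker_diagonal, Matrix.diagonal_sub]
    apply congrArg Matrix.diagonal
    funext ij
    simp only [Function.comp_apply, Pi.sub_apply]
    push_cast
    ring
  have hDT : Dᵀ = D := by rw [hD, Matrix.diagonal_transpose]
  have h1 : (U ⊗ₖ Uᴴᵀ) * (D ⊗ₖ 1) * (Uᴴ ⊗ₖ Uᵀ) = (U * D * Uᴴ) ⊗ₖ 1 := by
    rw [← Matrix.mul_kronecker_mul, ← Matrix.mul_kronecker_mul, Matrix.mul_one,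
      ← Matrix.transpose_mul, hU1, Matrix.transpose_one]
  have h2b : (U * D * Uᴴ)ᵀ = Uᴴᵀ * D * Uᵀ := by
    rw [Matrix.transpose_mul, Matrix.transpose_mul, hDT, Matrix.mul_assoc]
  have h2 : (U ⊗ₖ Uᴴᵀ) * ((1 : Matrix (Fin n) (Fin n) ℂ) ⊗ₖ D) * (Uᴴ ⊗ₖ Uᵀ)
      = 1 ⊗ₖ (U * D * Uᴴ)ᵀ := by
    rw [← Matrix.mul_kronecker_mul, ← Matrix.mul_kronecker_mul, Matrix.mul_one, hU1, h2b,
      Matrix.mul_assoc]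
  rw [hWH, ← hdiag, Matrix.mul_sub, Matrix.sub_mul, h1, h2]

lemma conj_diag_isHermitian {N : Type*} [Fintype N] [DecidableEq N]
    (U : Matrix N N ℂ) (v : N → ℝ) :
    (U * Matrix.diagonal (Complex.ofReal ∘ v) * Uᴴ).IsHermitian := by
  have hstar : star (Complex.ofReal ∘ v) = Complex.ofReal ∘ v := by
    funext i
    simp [Complex.conj_ofReal]
  show _ = _
  rw [Matrix.conjTranspose_mul, Matrix.conjTranspose_mul, Matrix.conjTranspose_conjTranspose,
    Matrix.diagonal_conjTranspose, hstar, Matrix.mul_assoc]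

/-- For `0 < p ≤ p' < ∞`, every `p`-cost operator on `ℂ³` is a sum of `p'`-cost operators:
`C_p(ℂ³) ⊆ C_{p'}(ℂ³)`. -/
theorem qutrit_cost_subset (p p' : ℝ) (hp : 0 < p) (hpp' : p ≤ p')
    (A : Matrix (Fin 3) (Fin 3) ℂ) (hA : A.IsHermitian) :
    ∃ (K : ℕ) (B : Fin K → Matrix (Fin 3) (Fin 3) ℂ),
      (∀ k, (B k).IsHermitian) ∧
      costOp p A = ∑ k, costOp p' (B k) := by
  classical
  have hp' : 0 < p' := hp.trans_le hpp'
  set μ : Fin 3 → ℝ := hA.eigenvalues with hμ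
  set σ : Equiv.Perm (Fin 3) := Tuple.sort μ with hσ
  set ν : Fin 3 → ℝ := μ ∘ σ with hν
  have hab : ν 0 ≤ ν 1 := Tuple.monotone_sort μ (by decide : (0 : Fin 3) ≤ 1)
  have hbc : ν 1 ≤ ν 2 := Tuple.monotone_sort μ (by decide : (1 : Fin 3) ≤ 2)
  obtain ⟨g₁, g₂, hg⟩ := scalar_key hp hp' hpp' hab hbc
  have hmem : ∀ i : Fin 3, μ i ∈ ({ν 0, ν 1, ν 2} : Set ℝ) := by
    intro i
    have h1 : μ i = ν (σ.symm i) := by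
      rw [hν]
      simp only [Function.comp_apply, Equiv.apply_symm_apply]
    rw [h1]
    have h2 : ∀ k : Fin 3, ν k ∈ ({ν 0, ν 1, ν 2} : Set ℝ) := by
      intro k
      fin_cases k <;> simp
    exact h2 _
  -- spectral data
  set U₀ : Matrix (Fin 3) (Fin 3) ℂ := (hA.eigenvectorUnitary : Matrix (Fin 3) (Fin 3) ℂ)
    with hU₀
  have hU1 : U₀ * U₀ᴴ = 1 := by
    have := hA.eigenvectorUnitary.2
    rw [Matrix.mem_unitaryGroup_iff] at this
    rw [hU₀, ← Matrix.star_eq_conjTranspose]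
    exact this
  have hU2 : U₀ᴴ * U₀ = 1 := by
    have := hA.eigenvectorUnitary.2
    rw [Matrix.mem_unitaryGroup_iff'] at this
    rw [hU₀, ← Matrix.star_eq_conjTranspose]
    exact this
  have hAspec : A = U₀ * Matrix.diagonal (Complex.ofReal ∘ μ) * U₀ᴴ := by
    rw [hU₀, hμ, ← Matrix.star_eq_conjTranspose]
    exact hA.spectral_theorem
  -- the Kronecker unitary
  set W : Matrix (Fin 3 × Fin 3) (Fin 3 × Fin 3) ℂ := U₀ ⊗ₖ U₀ᴴᵀ with hW
  have hUHT : (U₀ᴴᵀ)ᴴ = U₀ᵀ := by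
    ext i j
    simp [Matrix.conjTranspose_apply, Matrix.transpose_apply]
  have hWH : Wᴴ = U₀ᴴ ⊗ₖ U₀ᵀ := by rw [hW, kron_conjTranspose, hUHT]
  have hW1 : W * Wᴴ = 1 := by
    rw [hW, hWH, ← Matrix.mul_kronecker_mul, hU1, ← Matrix.transpose_mul, hU1,
      Matrix.transpose_one, Matrix.one_kronecker_one]
  have hW2 : Wᴴ * W = 1 := by
    rw [hW, hWH, ← Matrix.mul_kronecker_mul, hU2, ← Matrix.transpose_mul, hU2,
      Matrix.transpose_one, Matrix.one_kronecker_one]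
  -- cost operators of conjugated diagonals
  have hcost : ∀ (r : ℝ) (v : Fin 3 → ℝ),
      costOp r (U₀ * Matrix.diagonal (Complex.ofReal ∘ v) * U₀ᴴ)
        = W * Matrix.diagonal
            (Complex.ofReal ∘ fun ij : Fin 3 × Fin 3 => |v ij.1 - v ij.2| ^ r) * Wᴴ := by
    intro r v
    show cfc (fun x : ℝ => |x| ^ r) _ = _
    rw [kron_conj_decomp U₀ hU1 hU2 v]
    rw [cfc_unitary_diag (U₀ ⊗ₖ U₀ᴴᵀ) hW1 hW2 (fun ij : Fin 3 × Fin 3 => v ij.1 - v ij.2)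
      (fun x : ℝ => |x| ^ r)]
    rfl
  refine ⟨2, ![U₀ * Matrix.diagonal (Complex.ofReal ∘ (g₁ ∘ μ)) * U₀ᴴ,
               U₀ * Matrix.diagonal (Complex.ofReal ∘ (g₂ ∘ μ)) * U₀ᴴ], ?_, ?_⟩
  · intro k
    fin_cases k
    · exact conj_diag_isHermitian U₀ (g₁ ∘ μ)
    · exact conj_diag_isHermitian U₀ (g₂ ∘ μ)
  · rw [Fin.sum_univ_two]
    simp only [Matrix.cons_val_zero, Matrix.cons_val_one, Matrix.head_cons]
    rw [show A = U₀ * Matrix.diagonal (Complex.ofReal ∘ μ) * U₀ᴴ from hAspec,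
      hcost p μ, hcost p' (g₁ ∘ μ), hcost p' (g₂ ∘ μ), ← Matrix.add_mul, ← Matrix.mul_add,
      Matrix.diagonal_add]
    congr 1
    congr 1
    apply congrArg Matrix.diagonal
    funext ij
    simp only [Function.comp_apply, Pi.add_apply]
    rw [← Complex.ofReal_add]
    exact congrArg Complex.ofReal (hg (μ ij.1) (hmem ij.1) (μ ij.2) (hmem ij.2))
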